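/- Let k be a field and let G₁ and G₂ be groups such that every group homomorphism from G₁ to the additive group (k, +) is trivial and every group homomorphism from G₂ to (k, +) is trivial. Let V₁ be a k-linear representation of G₁ and V₂ a k-linear representation of G₂, and regard V₁ ⊕ V₂ as a representation of G₁ × G₂ via (g₁, g₂)·(v₁, v₂) = (g₁·v₁, g₂·v₂). Then there is an isomorphism of k-vector spaces H¹(G₁ × G₂, V₁ ⊕ V₂) ≅ H¹(G₁, V₁) ⊕ H¹(G₂, V₂). -/

import Mathlib

namespace Stmt9

variable {k : Type*} [Field k]

/-- The `k`-submodule of 1-cocycles `f : G → M` for a representation `ρ`. -/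
def oneCocycles {G M : Type*} [Group G] [AddCommGroup M] [Module k M]
    (ρ : Representation k G M) : Submodule k (G → M) where
  carrier := {f | ∀ g h : G, f (g * h) = f g + ρ g (f h)}
  add_mem' := by
    intro f₁ f₂ h₁ h₂ g h
    simp only [Pi.add_apply, h₁ g h, h₂ g h, map_add]
    abel
  zero_mem' := by
    intro g h
    simp
  smul_mem' := by
    intro c f hf g h
    simp only [Pi.smul_apply, hf g h, smul_add, map_smul]

/-- The `k`-submodule of 1-coboundaries inside the 1-cocycles. -/
def oneCoboundaries {G M : Type*} [Group G] [AddCommGroup M] [Module k M]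
    (ρ : Representation k G M) : Submodule k ↥(oneCocycles ρ) where
  carrier := {f | ∃ m : M, ∀ g : G, (f : G → M) g = ρ g m - m}
  add_mem' := by
    rintro f₁ f₂ ⟨m₁, h₁⟩ ⟨m₂, h₂⟩
    refine ⟨m₁ + m₂, fun g => ?_⟩
    simp only [Submodule.coe_add, Pi.add_apply, h₁ g, h₂ g, map_add]
    abel
  zero_mem' := ⟨0, fun g => by simp⟩
  smul_mem' := by
    rintro c f ⟨m, hm⟩
    refine ⟨c • m, fun g => ?_⟩
    simp only [SetLike.val_smul, Pi.smul_apply, hm g, map_smul, smul_sub]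

/-- Degree-one group cohomology `H¹(G, M)` of a representation, defined as
1-cocycles modulo 1-coboundaries. -/
abbrev H1 {G M : Type*} [Group G] [AddCommGroup M] [Module k M]
    (ρ : Representation k G M) :=
  ↥(oneCocycles ρ) ⧸ oneCoboundaries ρ

theorem hom_zero {G V : Type*} [Group G] [AddCommGroup V] [Module k V]
    (h : ∀ f : G → k, (∀ x y : G, f (x * y) = f x + f y) → ∀ x, f x = 0)
    (φ : G → V) (hφ : ∀ x y : G, φ (x * y) = φ x + φ y) (x : G) : φ x = 0 := by
  rw [← Module.forall_dual_apply_eq_zero_iff k]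
  intro l
  refine h (fun g => l (φ g)) (fun a b => ?_) x
  show l (φ (a * b)) = l (φ a) + l (φ b)
  rw [hφ, map_add]

/-- Lemma `lem:ext`(b), `H¹` version.  Let `G₁, G₂` be groups
admitting no non-trivial homomorphism to `(k, +)`, with representations `V₁, V₂`
respectively, and let `G₁ × G₂` act on `V₁ × V₂` componentwise.  Then
`H¹(G₁ × G₂, V₁ ⊕ V₂) ≅ H¹(G₁, V₁) ⊕ H¹(G₂, V₂)` as `k`-vector spaces. -/
theorem stmt9 {G₁ G₂ : Type*} [Group G₁] [Group G₂]
    {V₁ V₂ : Type*} [AddCommGroup V₁] [Module k V₁] [AddCommGroup V₂] [Module k V₂]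
    (ρ₁ : Representation k G₁ V₁) (ρ₂ : Representation k G₂ V₂)
    (h₁ : ∀ f : G₁ → k, (∀ x y : G₁, f (x * y) = f x + f y) → ∀ x, f x = 0)
    (h₂ : ∀ f : G₂ → k, (∀ x y : G₂, f (x * y) = f x + f y) → ∀ x, f x = 0)
    (ρ : Representation k (G₁ × G₂) (V₁ × V₂))
    (hρ : ∀ g : G₁ × G₂, ∀ v : V₁ × V₂, ρ g v = (ρ₁ g.1 v.1, ρ₂ g.2 v.2)) :
    Nonempty (H1 ρ ≃ₗ[k] (H1 ρ₁ × H1 ρ₂)) := by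
  classical
  have hb : ∀ f : oneCocycles ρ, ∀ g : G₁, ((f : (G₁ × G₂) → V₁ × V₂) (g, 1)).2 = 0 := by
    intro f g
    refine hom_zero h₁ (fun g => ((f : (G₁ × G₂) → V₁ × V₂) (g, 1)).2) (fun x y => ?_) g
    show ((f : (G₁ × G₂) → V₁ × V₂) (x * y, 1)).2 =
      ((f : (G₁ × G₂) → V₁ × V₂) (x, 1)).2 + ((f : (G₁ × G₂) → V₁ × V₂) (y, 1)).2
    have h := f.2 (x, 1) (y, 1)
    simp only [Prod.mk_mul_mk, mul_one] at h
    rw [h, hρ]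
    simp
  have hc : ∀ f : oneCocycles ρ, ∀ h : G₂, ((f : (G₁ × G₂) → V₁ × V₂) (1, h)).1 = 0 := by
    intro f h
    refine hom_zero h₂ (fun h => ((f : (G₁ × G₂) → V₁ × V₂) (1, h)).1) (fun x y => ?_) h
    show ((f : (G₁ × G₂) → V₁ × V₂) (1, x * y)).1 =
      ((f : (G₁ × G₂) → V₁ × V₂) (1, x)).1 + ((f : (G₁ × G₂) → V₁ × V₂) (1, y)).1
    have h := f.2 (1, x) (1, y)
    simp only [Prod.mk_mul_mk, mul_one] at h
    rw [h, hρ]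
    simp
  have key : ∀ f : oneCocycles ρ, ∀ p : G₁ × G₂,
      (f : (G₁ × G₂) → V₁ × V₂) p =
        (((f : (G₁ × G₂) → V₁ × V₂) (p.1, 1)).1,
          ((f : (G₁ × G₂) → V₁ × V₂) (1, p.2)).2) := by
    intro f p
    have h := f.2 (p.1, 1) (1, p.2)
    simp only [Prod.mk_mul_mk, mul_one, one_mul] at h
    rw [h, hρ]
    ext
    · simp [hc f p.2]
    · simp [hb f p.1]
  have cocy₁ : ∀ f : oneCocycles ρ,
      (fun g => ((f : (G₁ × G₂) → V₁ × V₂) (g, 1)).1) ∈ oneCocycles ρ₁ := by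
    intro f x y
    show ((f : (G₁ × G₂) → V₁ × V₂) (x * y, 1)).1 =
      ((f : (G₁ × G₂) → V₁ × V₂) (x, 1)).1 + ρ₁ x ((f : (G₁ × G₂) → V₁ × V₂) (y, 1)).1
    have h := f.2 (x, 1) (y, 1)
    simp only [Prod.mk_mul_mk, mul_one] at h
    rw [h, hρ]
    simp
  have cocy₂ : ∀ f : oneCocycles ρ,
      (fun h => ((f : (G₁ × G₂) → V₁ × V₂) (1, h)).2) ∈ oneCocycles ρ₂ := by
    intro f x y
    show ((f : (G₁ × G₂) → V₁ × V₂) (1, x * y)).2 =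
      ((f : (G₁ × G₂) → V₁ × V₂) (1, x)).2 + ρ₂ x ((f : (G₁ × G₂) → V₁ × V₂) (1, y)).2
    have h := f.2 (1, x) (1, y)
    simp only [Prod.mk_mul_mk, mul_one] at h
    rw [h, hρ]
    simp
  let P₁ : oneCocycles ρ →ₗ[k] oneCocycles ρ₁ :=
    { toFun := fun f => ⟨fun g => ((f : (G₁ × G₂) → V₁ × V₂) (g, 1)).1, cocy₁ f⟩
      map_add' := fun f g => rfl
      map_smul' := fun c f => rfl }
  let P₂ : oneCocycles ρ →ₗ[k] oneCocycles ρ₂ :=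
    { toFun := fun f => ⟨fun h => ((f : (G₁ × G₂) → V₁ × V₂) (1, h)).2, cocy₂ f⟩
      map_add' := fun f g => rfl
      map_smul' := fun c f => rfl }
  let F : oneCocycles ρ →ₗ[k] H1 ρ₁ × H1 ρ₂ :=
    ((oneCoboundaries ρ₁).mkQ.comp P₁).prod ((oneCoboundaries ρ₂).mkQ.comp P₂)
  have hle : oneCoboundaries ρ ≤ LinearMap.ker F := by
    rintro f ⟨m, hm⟩
    have mem₁ : P₁ f ∈ oneCoboundaries ρ₁ := by
      refine ⟨m.1, fun g => ?_⟩
      have h := hm (g, 1)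
      rw [hρ] at h
      have h' := congrArg Prod.fst h
      simpa [P₁] using h'
    have mem₂ : P₂ f ∈ oneCoboundaries ρ₂ := by
      refine ⟨m.2, fun g => ?_⟩
      have h := hm (1, g)
      rw [hρ] at h
      have h' := congrArg Prod.snd h
      simpa [P₂] using h'
    simp only [LinearMap.mem_ker, F, LinearMap.prod_apply, LinearMap.coe_comp,
      Function.comp_apply, Function.prod, Prod.mk_eq_zero, Submodule.mkQ_apply,
      Submodule.Quotient.mk_eq_zero]
    exact ⟨mem₁, mem₂⟩
  have hker : LinearMap.ker F ≤ oneCoboundaries ρ := by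
    intro f hf
    simp only [LinearMap.mem_ker, F, LinearMap.prod_apply, LinearMap.coe_comp,
      Function.comp_apply, Function.prod, Prod.mk_eq_zero, Submodule.mkQ_apply,
      Submodule.Quotient.mk_eq_zero] at hf
    obtain ⟨⟨m₁, hm₁⟩, ⟨m₂, hm₂⟩⟩ := hf
    refine ⟨(m₁, m₂), fun p => ?_⟩
    rw [key f p, hρ]
    have e₁ := hm₁ p.1
    have e₂ := hm₂ p.2
    simp only [P₁, P₂, LinearMap.coe_mk, AddHom.coe_mk] at e₁ e₂
    ext
    · simpa using e₁
    · simpa using e₂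
  have hsurj : Function.Surjective F := by
    rintro ⟨x, y⟩
    obtain ⟨a, rfl⟩ := (oneCoboundaries ρ₁).mkQ_surjective x
    obtain ⟨d, rfl⟩ := (oneCoboundaries ρ₂).mkQ_surjective y
    have hmem : (fun p : G₁ × G₂ => ((a : G₁ → V₁) p.1, (d : G₂ → V₂) p.2))
        ∈ oneCocycles ρ := by
      intro g h
      show ((a : G₁ → V₁) (g * h).1, (d : G₂ → V₂) (g * h).2) = _
      rw [hρ]
      have ha := a.2 g.1 h.1
      have hd := d.2 g.2 h.2
      ext
      · simpa using ha
      · simpa using hd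
    refine ⟨⟨_, hmem⟩, ?_⟩
    have hP₁ : P₁ ⟨_, hmem⟩ = a := Subtype.ext (funext fun g => rfl)
    have hP₂ : P₂ ⟨_, hmem⟩ = d := Subtype.ext (funext fun h => rfl)
    simp only [F, LinearMap.prod_apply, LinearMap.coe_comp, Function.comp_apply,
      Function.prod, Submodule.mkQ_apply, hP₁, hP₂]
  refine ⟨LinearEquiv.ofBijective ((oneCoboundaries ρ).liftQ F hle) ⟨?_, ?_⟩⟩
  · rw [← LinearMap.ker_eq_bot]
    exact Submodule.ker_liftQ_eq_bot _ _ _ hker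
  · intro y
    obtain ⟨f, rfl⟩ := hsurj y
    exact ⟨Submodule.Quotient.mk f, rfl⟩

end Stmt9
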